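/- Subsampled Gaussian mechanism, first direction (exact formula): let σ > 0, q ∈ [0, 1], g, g' ∈ ℝ, and set d = g' − g. Let P be the Gaussian measure on ℝ with mean g and variance σ², and let M = (1 − q)·P + q·N(g', σ²) be the subsampled-Gaussian mixture. Then for every natural number λ, ∫_ℝ ((dM/dP)(w))^{λ+1} dP(w) = Σ_{k=0}^{λ+1} C(λ+1, k) · q^k · (1 − q)^{λ+1−k} · exp((k² − k)·d² / (2σ²)); equivalently, exp(λ · D_{λ+1}(M ‖ P)) equals the expectation of exp((K² − K)·d² / (2σ²)) for K ~ Binomial(λ+1, q). -/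
import Mathlib


set_option autoImplicit false

open MeasureTheory ProbabilityTheory ENNReal
open scoped NNReal Real

/-- Completing the square: pdf times exponential tilt. -/
lemma gaussianPDFReal_mul_exp (m : ℝ) (v : ℝ≥0) (hv : (v:ℝ) ≠ 0) (a b x : ℝ) :
    gaussianPDFReal m v x * Real.exp (a * x + b)
      = Real.exp (a * m + a ^ 2 * v / 2 + b) * gaussianPDFReal (m + a * v) v x := by
  have h : -(x - m) ^ 2 / (2 * (v:ℝ)) + (a * x + b)
      = (a * m + a ^ 2 * v / 2 + b) + -(x - (m + a * v)) ^ 2 / (2 * (v:ℝ)) := by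
    field_simp
    ring
  simp only [gaussianPDFReal]
  rw [mul_assoc, ← Real.exp_add, h, Real.exp_add]
  ring

/-- Gaussian MGF, lintegral version. -/
lemma lintegral_exp_gaussian (m : ℝ) (v : ℝ≥0) (hv : v ≠ 0) (a b : ℝ) :
    ∫⁻ x, ENNReal.ofReal (Real.exp (a * x + b)) ∂(gaussianReal m v)
      = ENNReal.ofReal (Real.exp (a * m + a ^ 2 * v / 2 + b)) := by
  have hvr : (v:ℝ) ≠ 0 := by exact_mod_cast hv
  rw [gaussianReal_of_var_ne_zero _ hv,
    lintegral_withDensity_eq_lintegral_mul _ (measurable_gaussianPDF m v)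
      (by fun_prop : Measurable fun x : ℝ ↦ ENNReal.ofReal (Real.exp (a * x + b)))]
  have : ∀ x : ℝ, (gaussianPDF m v * fun x ↦ ENNReal.ofReal (Real.exp (a * x + b))) x
      = ENNReal.ofReal (Real.exp (a * m + a ^ 2 * v / 2 + b)) * gaussianPDF (m + a * v) v x := by
    intro x
    simp only [Pi.mul_apply, gaussianPDF]
    rw [← ENNReal.ofReal_mul (gaussianPDFReal_nonneg _ _ _),
      ← ENNReal.ofReal_mul (Real.exp_nonneg _), gaussianPDFReal_mul_exp m v hvr a b x]
  simp_rw [this]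
  rw [lintegral_const_mul _ (measurable_gaussianPDF _ _), lintegral_gaussianPDF_eq_one _ hv,
    mul_one]

/-- Subsampled Gaussian mechanism, first direction (exact formula): with
`P = N(g, σ²)` and `M = (1−q)·P + q·N(g', σ²)`, for every natural `λ`,
`∫ ((dM/dP)(w))^{λ+1} dP(w) = Σ_{k=0}^{λ+1} C(λ+1,k) q^k (1−q)^{λ+1−k} exp((k²−k)d²/(2σ²))`
where `d = g' − g`; equivalently, `exp(λ D_{λ+1}(M‖P))` equals the expectation of
`exp((K²−K)d²/(2σ²))` for `K ~ Binomial(λ+1, q)`. -/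
theorem subsampled_gaussian_privacy_cost_left
    (σ : ℝ) (hσ : 0 < σ) (q : ℝ) (hq0 : 0 ≤ q) (hq1 : q ≤ 1)
    (g g' : ℝ) (l : ℕ)
    (P : Measure ℝ) (hP : P = gaussianReal g (Real.toNNReal (σ ^ 2)))
    (M : Measure ℝ)
    (hM : M = (ENNReal.ofReal (1 - q)) • P +
      (ENNReal.ofReal q) • gaussianReal g' (Real.toNNReal (σ ^ 2)))
    (d : ℝ) (hd : d = g' - g) :
    ∫⁻ w, (M.rnDeriv P w) ^ ((l : ℝ) + 1) ∂P =
      ENNReal.ofReal (∑ k ∈ Finset.range (l + 2),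
        ((l + 1).choose k : ℝ) * q ^ k * (1 - q) ^ (l + 1 - k) *
          Real.exp (((k : ℝ) ^ 2 - (k : ℝ)) * d ^ 2 / (2 * σ ^ 2))) := by
  set v : NNReal := Real.toNNReal (σ ^ 2) with hvdef
  have hσ2 : (0:ℝ) < σ ^ 2 := by positivity
  have hv : v ≠ 0 := (Real.toNNReal_pos.mpr hσ2).ne'
  have hvr : (v : ℝ) = σ ^ 2 := Real.coe_toNNReal _ hσ2.le
  have hvr' : (v : ℝ) ≠ 0 := by rw [hvr]; exact hσ2.ne'
  have hq1' : (0:ℝ) ≤ 1 - q := by linarith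
  set a0 : ℝ := d / σ ^ 2 with ha0
  set b0 : ℝ := (g ^ 2 - g' ^ 2) / (2 * σ ^ 2) with hb0
  -- ratio of densities
  have hratio : ∀ x : ℝ, gaussianPDFReal g' v x
      = gaussianPDFReal g v x * Real.exp (a0 * x + b0) := by
    intro x
    have h : -(x - g') ^ 2 / (2 * (v:ℝ)) = -(x - g) ^ 2 / (2 * (v:ℝ)) + (a0 * x + b0) := by
      rw [hvr, ha0, hb0, hd]
      field_simp
      ring
    simp only [gaussianPDFReal]
    rw [h, Real.exp_add]
    ring
  -- the mixture as a withDensity over P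
  set f : ℝ → ℝ≥0∞ := fun x ↦
    ENNReal.ofReal (1 - q) + ENNReal.ofReal q * ENNReal.ofReal (Real.exp (a0 * x + b0)) with hfdef
  have hf : Measurable f := by fun_prop
  have hMP : M = P.withDensity f := by
    have hQ : gaussianReal g' v
        = P.withDensity (fun x ↦ ENNReal.ofReal (Real.exp (a0 * x + b0))) := by
      rw [hP, gaussianReal_of_var_ne_zero _ hv, gaussianReal_of_var_ne_zero _ hv,
        ← withDensity_mul _ (measurable_gaussianPDF g v) (by fun_prop)]
      congr 1
      ext x
      simp only [Pi.mul_apply, gaussianPDF]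
      rw [← ENNReal.ofReal_mul (gaussianPDFReal_nonneg _ _ _), ← hratio x]
    rw [hM, hQ, ← withDensity_smul' _ _ ENNReal.ofReal_ne_top,
      ← withDensity_const (μ := P) (ENNReal.ofReal (1 - q)),
      ← withDensity_add_right _ (by fun_prop)]
    rfl
  haveI : IsProbabilityMeasure P := hP ▸ inferInstance
  have hrn : M.rnDeriv P =ᵐ[P] f := hMP ▸ Measure.rnDeriv_withDensity P hf
  calc ∫⁻ w, (M.rnDeriv P w) ^ ((l : ℝ) + 1) ∂P
      = ∫⁻ w, (f w) ^ ((l : ℝ) + 1) ∂P := by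
        refine lintegral_congr_ae (hrn.mono fun x hx ↦ by dsimp only; rw [hx])
    _ = ∫⁻ w, ∑ k ∈ Finset.range (l + 2), ENNReal.ofReal
          ((q * Real.exp (a0 * w + b0)) ^ k * (1 - q) ^ (l + 1 - k)
            * ((l + 1).choose k : ℝ)) ∂P := by
        refine lintegral_congr fun x ↦ ?_
        simp only [hfdef]
        rw [show ((l : ℝ) + 1) = ((l + 1 : ℕ) : ℝ) by push_cast; ring, ENNReal.rpow_natCast]
        rw [← ENNReal.ofReal_mul hq0, ← ENNReal.ofReal_add hq1' (mul_nonneg hq0 (Real.exp_nonneg _)),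
          ← ENNReal.ofReal_pow (add_nonneg hq1' (mul_nonneg hq0 (Real.exp_nonneg _))),
          show (1 - q) + q * Real.exp (a0 * x + b0)
            = (q * Real.exp (a0 * x + b0)) + (1 - q) by ring,
          add_pow, ENNReal.ofReal_sum_of_nonneg (fun i _ ↦ mul_nonneg (mul_nonneg
            (pow_nonneg (mul_nonneg hq0 (Real.exp_nonneg _)) _) (pow_nonneg hq1' _))
            (Nat.cast_nonneg _))]
    _ = ∑ k ∈ Finset.range (l + 2), ∫⁻ w, ENNReal.ofReal
          ((q * Real.exp (a0 * w + b0)) ^ k * (1 - q) ^ (l + 1 - k)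
            * ((l + 1).choose k : ℝ)) ∂P := by
        exact lintegral_finset_sum _ fun k _ ↦ by fun_prop
    _ = ∑ k ∈ Finset.range (l + 2), ENNReal.ofReal
          (((l + 1).choose k : ℝ) * q ^ k * (1 - q) ^ (l + 1 - k) *
            Real.exp (((k : ℝ) ^ 2 - (k : ℝ)) * d ^ 2 / (2 * σ ^ 2))) := by
        refine Finset.sum_congr rfl fun k _ ↦ ?_
        have hterm : ∀ x : ℝ, (q * Real.exp (a0 * x + b0)) ^ k * (1 - q) ^ (l + 1 - k)
              * ((l + 1).choose k : ℝ)
            = (((l + 1).choose k : ℝ) * q ^ k * (1 - q) ^ (l + 1 - k))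
              * Real.exp (((k : ℝ) * a0) * x + (k : ℝ) * b0) := by
          intro x
          rw [mul_pow, ← Real.exp_nat_mul,
            show (k : ℝ) * (a0 * x + b0) = ((k : ℝ) * a0) * x + (k : ℝ) * b0 by ring]
          ring
        have hc : (0:ℝ) ≤ ((l + 1).choose k : ℝ) * q ^ k * (1 - q) ^ (l + 1 - k) :=
          mul_nonneg (mul_nonneg (Nat.cast_nonneg _) (pow_nonneg hq0 _)) (pow_nonneg hq1' _)
        have hexp : (k:ℝ) * a0 * g + ((k:ℝ) * a0) ^ 2 * (v:ℝ) / 2 + (k:ℝ) * b0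
            = ((k : ℝ) ^ 2 - (k : ℝ)) * d ^ 2 / (2 * σ ^ 2) := by
          rw [hvr, ha0, hb0, hd]
          field_simp
          ring
        simp_rw [hterm, ENNReal.ofReal_mul hc]
        rw [lintegral_const_mul _ (by fun_prop), hP, lintegral_exp_gaussian g _ hv, hexp,
          ← ENNReal.ofReal_mul hc]
    _ = ENNReal.ofReal (∑ k ∈ Finset.range (l + 2),
          ((l + 1).choose k : ℝ) * q ^ k * (1 - q) ^ (l + 1 - k) *
            Real.exp (((k : ℝ) ^ 2 - (k : ℝ)) * d ^ 2 / (2 * σ ^ 2))) := by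
        rw [ENNReal.ofReal_sum_of_nonneg (fun i _ ↦ mul_nonneg (mul_nonneg (mul_nonneg
          (Nat.cast_nonneg _) (pow_nonneg hq0 _)) (pow_nonneg hq1' _)) (Real.exp_nonneg _))]
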